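/- Let n be odd, n ≥ 5, m ≥ 4, and let G''(t) be the subgraph of G_{m,n} = S_m □ P_n induced by the two stars S_m × {u_t} and S_m × {u_{t+(n−1)/2}} (with both indices in {1,…,n}). Any radio labeling of G_{m,n} restricted to the 2m vertices of G''(t) (using distances and diameter of G_{m,n}) has span at least mn + m − (n−3)/2. -/

import Mathlib

open SimpleGraph

/-- The star graph on `m` vertices: vertex `0` is the center, adjacent to all others. -/
def starGraph (m : ℕ) : SimpleGraph (Fin m) :=
  SimpleGraph.fromRel (fun a _ => (a : ℕ) = 0)

/-- The stacked-book graph `G_{m,n} = S_m □ P_n`. -/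
def stackedBook (m n : ℕ) : SimpleGraph (Fin m × Fin n) :=
  starGraph m □ SimpleGraph.pathGraph n

/-- A radio labeling of `G`: `|f u - f v| ≥ diam G + 1 - d(u,v)` for all distinct `u, v`. -/
def IsRadioLabeling {V : Type*} (G : SimpleGraph V) (f : V → ℕ) : Prop :=
  ∀ u v : V, u ≠ v → (G.diam : ℤ) + 1 - G.dist u v ≤ |(f u : ℤ) - (f v : ℤ)|

/-- The span of a labeling on a finite vertex set: max label minus min label. -/
noncomputable def labelSpan {V : Type*} [Fintype V] (f : V → ℕ) : ℕ :=
  Finset.univ.sup f - sInf (Set.range f)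

/-- The radio number: minimum span over all radio labelings. -/
noncomputable def radioNumber {V : Type*} [Fintype V] (G : SimpleGraph V) : ℕ :=
  sInf {s | ∃ f : V → ℕ, IsRadioLabeling G f ∧ labelSpan f = s}


/-- potential bound for walk lengths -/
lemma walk_pot {V : Type*} {G : SimpleGraph V} (φ : V → ℤ)
    (h : ∀ u v, G.Adj u v → φ u ≤ φ v + 1) {u v : V} (p : G.Walk u v) :
    φ u - φ v ≤ p.length := by
  induction p with
  | nil => simp
  | cons hadj p ih =>
    have := h _ _ hadj
    rw [SimpleGraph.Walk.length_cons]
    push_cast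
    linarith

lemma path_walk {n : ℕ} : ∀ (d : ℕ) (x y : Fin n), (y : ℕ) = (x : ℕ) + d →
    ∃ p : (SimpleGraph.pathGraph n).Walk x y, p.length = d := by
  intro d
  induction d with
  | zero => intro x y h; have : x = y := Fin.ext (by omega); subst this; exact ⟨.nil, rfl⟩
  | succ d ih =>
    intro x y h
    have hx1 : (x : ℕ) + 1 < n := by have := y.isLt; omega
    set x' : Fin n := ⟨(x : ℕ) + 1, hx1⟩ with hx'
    have hadj : (SimpleGraph.pathGraph n).Adj x x' := by
      rw [SimpleGraph.pathGraph_adj]; left; rfl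
    obtain ⟨p, hp⟩ := ih x' y (by simp [hx']; omega)
    exact ⟨.cons hadj p, by simp [hp]⟩

lemma starGraph_adj' {m : ℕ} {i j : Fin m} :
    (_root_.starGraph m).Adj i j ↔ i ≠ j ∧ ((i : ℕ) = 0 ∨ (j : ℕ) = 0) := by
  simp [_root_.starGraph, SimpleGraph.fromRel_adj]

lemma star_walk {m : ℕ} (hm : 1 ≤ m) (i j : Fin m) :
    ∃ p : (_root_.starGraph m).Walk i j,
      p.length + (if (i : ℕ) = 0 then 1 else 0) + (if (j : ℕ) = 0 then 1 else 0) ≤ 2 := by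
  by_cases hij : i = j
  · subst hij
    refine ⟨.nil, ?_⟩
    simp only [SimpleGraph.Walk.length_nil]
    split_ifs <;> omega
  · by_cases hi : (i : ℕ) = 0
    · have hj : ¬ (j : ℕ) = 0 := fun hj => hij (Fin.ext (by omega))
      have hadj : (_root_.starGraph m).Adj i j := starGraph_adj'.mpr ⟨hij, Or.inl hi⟩
      exact ⟨.cons hadj .nil, by simp [hi, hj]⟩
    · by_cases hj : (j : ℕ) = 0
      · have hadj : (_root_.starGraph m).Adj i j := starGraph_adj'.mpr ⟨hij, Or.inr hj⟩
        exact ⟨.cons hadj .nil, by simp [hi, hj]⟩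
      · have h0 : (0 : ℕ) < m := hm
        set z : Fin m := ⟨0, h0⟩ with hz
        have ha1 : (_root_.starGraph m).Adj i z := starGraph_adj'.mpr
          ⟨fun h => hi (by simp [h, hz]), Or.inr rfl⟩
        have ha2 : (_root_.starGraph m).Adj z j := starGraph_adj'.mpr
          ⟨fun h => hj (by simp [← h, hz]), Or.inl rfl⟩
        exact ⟨.cons ha1 (.cons ha2 .nil), by simp [hi, hj]⟩

lemma star_connected {m : ℕ} (hm : 1 ≤ m) : (_root_.starGraph m).Connected := by
  have : Nonempty (Fin m) := ⟨⟨0, hm⟩⟩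
  refine ⟨fun u v => ?_⟩
  obtain ⟨p, -⟩ := star_walk hm u v
  exact ⟨p⟩

lemma path_preconnected {n : ℕ} : (SimpleGraph.pathGraph n).Preconnected := by
  intro u v
  rcases le_total (u : ℕ) (v : ℕ) with h | h
  · obtain ⟨p, -⟩ := path_walk ((v : ℕ) - (u : ℕ)) u v (by omega)
    exact ⟨p⟩
  · obtain ⟨p, -⟩ := path_walk ((u : ℕ) - (v : ℕ)) v u (by omega)
    exact Reachable.symm ⟨p⟩

lemma stackedBook_dist_ub {m n : ℕ} (hm : 1 ≤ m) (i j : Fin m) (x y : Fin n) (d : ℕ)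
    (hxy : (y : ℕ) = (x : ℕ) + d) :
    (stackedBook m n).dist (i, x) (j, y) + (if (i : ℕ) = 0 then 1 else 0)
      + (if (j : ℕ) = 0 then 1 else 0) ≤ d + 2 := by
  obtain ⟨ps, hps⟩ := star_walk hm i j
  obtain ⟨pp, hpp⟩ := path_walk d x y hxy
  have this : (stackedBook m n).dist (i, x) (j, y) ≤ ps.length + d := by
    have hd := SimpleGraph.dist_le
      ((ps.boxProdLeft (SimpleGraph.pathGraph n) x).append (pp.boxProdRight (_root_.starGraph m) j))
    rw [SimpleGraph.Walk.length_append] at hd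
    have hl1 : (ps.boxProdLeft (SimpleGraph.pathGraph n) x).length = ps.length :=
      SimpleGraph.Walk.length_map ..
    have hl2 : (pp.boxProdRight (_root_.starGraph m) j).length = pp.length :=
      SimpleGraph.Walk.length_map ..
    rw [hl1, hl2, hpp] at hd
    simpa [stackedBook] using hd
  split_ifs at hps ⊢ <;> omega

lemma diam_lb (m n : ℕ) (hm : 4 ≤ m) (hn : 5 ≤ n) : n + 1 ≤ (stackedBook m n).diam := by
  have : Nonempty (Fin n) := ⟨⟨0, by omega⟩⟩
  have : Nonempty (Fin m) := ⟨⟨0, by omega⟩⟩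
  have hconn : (stackedBook m n).Connected :=
    (star_connected (by omega : 1 ≤ m)).boxProd ⟨path_preconnected⟩
  have hne : (stackedBook m n).ediam ≠ ⊤ := by
    obtain ⟨u, v, huv⟩ := SimpleGraph.exists_edist_eq_ediam_of_finite (G := stackedBook m n)
    rw [← huv, SimpleGraph.edist_ne_top_iff_reachable]
    exact hconn u v
  set u : Fin m × Fin n := (⟨1, by omega⟩, ⟨0, by omega⟩) with hu
  set v : Fin m × Fin n := (⟨2, by omega⟩, ⟨n - 1, by omega⟩) with hv
  have hdist : n + 1 ≤ (stackedBook m n).dist u v := by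
    obtain ⟨p, hp⟩ := (hconn u v).exists_walk_length_eq_dist
    set φ : Fin m × Fin n → ℤ := fun q =>
      (if (q.1 : ℕ) = 2 then 0 else if (q.1 : ℕ) = 0 then 1 else 2) - (q.2 : ℕ) with hφ
    have hpot : ∀ a b, (stackedBook m n).Adj a b → φ a ≤ φ b + 1 := by
      rintro ⟨i, s⟩ ⟨j, r⟩ hadj
      rcases hadj with ⟨hst, h2⟩ | ⟨hp2, h1⟩
      · rw [starGraph_adj'] at hst
        simp only [hφ] at *
        rcases hst.2 with h | h <;> simp only [h2] at * <;> split_ifs <;> omega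
      · rw [SimpleGraph.pathGraph_adj] at hp2
        simp only [hφ, h1] at *
        split_ifs <;> omega
    have := walk_pot φ hpot p
    rw [hp] at this
    have hφu : φ u = 2 := by simp [hφ, hu]
    have hφv : φ v = -(n - 1 : ℕ) := by simp [hφ, hv]
    rw [hφu, hφv] at this
    have h6 : (n + 1 : ℤ) ≤ (stackedBook m n).dist u v := by omega
    exact_mod_cast h6
  exact le_trans hdist (SimpleGraph.dist_le_diam hne)


lemma span_lower (F : Finset ℕ) (N k : ℕ) (hN : 1 ≤ N) (hcard : F.card = N)
    (hne : F.Nonempty)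
    (w : ℕ → ℕ) (hw : ∀ x, w x ≤ 1)
    (hgap : ∀ x ∈ F, ∀ y ∈ F, x < y → x + k + w x + w y ≤ y)
    (hW : ∑ x ∈ F, w x = 2) :
    F.min' hne + ((N - 1) * k + 2) ≤ F.max' hne := by
  obtain ⟨M, rfl⟩ : ∃ M, N = M + 1 := ⟨N - 1, by omega⟩
  set N := M + 1 with hNdef
  set o := F.orderIsoOfFin hcard with ho
  set g : ℕ → ℕ := fun i => if h : i < N then (o ⟨i, h⟩ : ℕ) else 0 with hg
  have gmem : ∀ i, i < N → g i ∈ F := by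
    intro i hi
    simp only [hg, dif_pos hi]
    exact (o ⟨i, hi⟩).2
  have gmono : ∀ i j, i < j → j < N → g i < g j := by
    intro i j hij hj
    have hi : i < N := lt_trans hij hj
    simp only [hg, dif_pos hi, dif_pos hj]
    exact_mod_cast o.strictMono (show (⟨i, hi⟩ : Fin N) < ⟨j, hj⟩ from hij)
  have hFim : F = (Finset.range N).image g := by
    apply (Finset.eq_of_subset_of_card_le ?_ ?_).symm
    · intro x hx
      obtain ⟨i, hi, rfl⟩ := Finset.mem_image.mp hx
      exact gmem i (Finset.mem_range.mp hi)
    · rw [Finset.card_image_of_injOn, Finset.card_range, hcard]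
      intro i hi j hj hij
      rcases lt_trichotomy i j with h | h | h
      · exact absurd hij (gmono i j h (Finset.mem_range.mp hj)).ne
      · exact h
      · exact absurd hij.symm (gmono j i h (Finset.mem_range.mp hi)).ne
  have hsumW : ∑ i ∈ Finset.range N, w (g i) = 2 := by
    rw [← hW, hFim, Finset.sum_image]
    intro i hi j hj hij
    rcases lt_trichotomy i j with h | h | h
    · exact absurd hij (gmono i j h (Finset.mem_range.mp hj)).ne
    · exact h
    · exact absurd hij.symm (gmono j i h (Finset.mem_range.mp hi)).ne
  have key : ∀ j, j < N → g 0 + j * k + ∑ i ∈ Finset.range j, (w (g i) + w (g (i + 1))) ≤ g j := by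
    intro j
    induction j with
    | zero => simp
    | succ j ih =>
      intro hj
      have hj' : j < N := by omega
      have h1 := ih hj'
      have h2 := hgap (g j) (gmem j hj') (g (j + 1)) (gmem _ hj) (gmono j (j + 1) (by omega) hj)
      rw [Finset.sum_range_succ]
      have hmul : (j + 1) * k = j * k + k := by ring
      omega
  have hlast := key M (by omega)
  have hA : ∑ i ∈ Finset.range M, w (g i) + w (g M) = 2 := by
    rw [← hsumW, Finset.sum_range_succ]
  have hB : w (g 0) + ∑ i ∈ Finset.range M, w (g (i + 1)) = 2 := by
    rw [← hsumW, Finset.sum_range_succ']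
    omega
  have hAB : ∑ i ∈ Finset.range M, (w (g i) + w (g (i + 1)))
      = ∑ i ∈ Finset.range M, w (g i) + ∑ i ∈ Finset.range M, w (g (i + 1)) :=
    Finset.sum_add_distrib
  have hw0 := hw (g 0)
  have hwl := hw (g M)
  have hmin : F.min' hne ≤ g 0 := Finset.min'_le F _ (gmem 0 (by omega))
  have hmax : g M ≤ F.max' hne := Finset.le_max' F _ (gmem M (by omega))
  have hN1 : N - 1 = M := by omega
  rw [hN1]
  omega

/-- any radio labeling of `G_{m,n}` restricted to the `2m` vertices of the
subgraph `G''(t)` (the stars at 1-based indices `t` and `t + (n-1)/2`) has span at least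
`mn + m - (n-3)/2`. -/
theorem stmt6 (m n t : ℕ) (hm : 4 ≤ m) (hn : 5 ≤ n) (ho : Odd n)
    (ht1 : 1 ≤ t) (ht2 : t + (n - 1) / 2 ≤ n)
    (f : Fin m × Fin n → ℕ) (hf : IsRadioLabeling (stackedBook m n) f) :
    m * n + m - (n - 3) / 2 ≤
      sSup (f '' {p : Fin m × Fin n |
          (p.2 : ℕ) = t - 1 ∨ (p.2 : ℕ) = t + (n - 1) / 2 - 1}) -
      sInf (f '' {p : Fin m × Fin n |
          (p.2 : ℕ) = t - 1 ∨ (p.2 : ℕ) = t + (n - 1) / 2 - 1}) := by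
  obtain ⟨r0, hr0⟩ := ho
  set r : ℕ := (n - 1) / 2 with hrdef
  have hrn : n = 2 * r + 1 := by omega
  have hr2 : 2 ≤ r := by omega
  have ha' : t - 1 < n := by omega
  have hb' : t - 1 + r < n := by omega
  set a : Fin n := ⟨t - 1, ha'⟩ with hadef
  set b : Fin n := ⟨t - 1 + r, hb'⟩ with hbdef
  have hdiam := diam_lb m n hm hn
  set wt : Fin m × Fin n → ℕ := fun p => if (p.1 : ℕ) = 0 then 1 else 0 with hwt
  set T : Finset (Fin m × Fin n) := Finset.univ.filter (fun p => p.2 = a ∨ p.2 = b) with hT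
  -- distance upper bound within T
  have hub : ∀ u ∈ T, ∀ v ∈ T, (stackedBook m n).dist u v + wt u + wt v ≤ r + 2 := by
    rintro ⟨i, x⟩ hu ⟨j, y⟩ hv
    obtain ⟨-, hx⟩ := Finset.mem_filter.mp hu
    obtain ⟨-, hy⟩ := Finset.mem_filter.mp hv
    have hm1 : 1 ≤ m := by omega
    simp only [hwt]
    rcases hx with rfl | rfl <;> rcases hy with rfl | rfl
    · have := stackedBook_dist_ub hm1 i j a a 0 (by omega)
      omega
    · have := stackedBook_dist_ub hm1 i j a b r (by simp [hadef, hbdef])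
      omega
    · have := stackedBook_dist_ub hm1 j i a b r (by simp [hadef, hbdef])
      rw [SimpleGraph.dist_comm] at this
      omega
    · have := stackedBook_dist_ub hm1 i j b b 0 (by omega)
      omega
  -- main gap inequality on vertices
  have hgapV : ∀ u ∈ T, ∀ v ∈ T, u ≠ v →
      ((r + 1 + wt u + wt v : ℕ) : ℤ) ≤ |(f u : ℤ) - (f v : ℤ)| := by
    intro u hu v hv hne
    have h1 := hf u v hne
    have h2 := hub u hu v hv
    have h3 : ((n : ℤ) + 1) ≤ ((stackedBook m n).diam : ℤ) := by exact_mod_cast hdiam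
    have h4 : ((stackedBook m n).dist u v : ℤ) + wt u + wt v ≤ r + 2 := by exact_mod_cast h2
    have h5 : (n : ℤ) = 2 * r + 1 := by exact_mod_cast hrn
    push_cast
    linarith
  -- injectivity on T
  have hinj : ∀ u ∈ T, ∀ v ∈ T, u ≠ v → f u ≠ f v := by
    intro u hu v hv hne heq
    have h := hgapV u hu v hv hne
    rw [heq] at h
    simp at h
    omega
  -- the two centers
  have hm0 : (0 : ℕ) < m := by omega
  set c1 : Fin m × Fin n := (⟨0, hm0⟩, a) with hc1
  set c2 : Fin m × Fin n := (⟨0, hm0⟩, b) with hc2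
  have hc1T : c1 ∈ T := Finset.mem_filter.mpr ⟨Finset.mem_univ _, Or.inl rfl⟩
  have hc2T : c2 ∈ T := Finset.mem_filter.mpr ⟨Finset.mem_univ _, Or.inr rfl⟩
  have hab : a ≠ b := by
    intro h
    have := congrArg Fin.val h
    simp [hadef, hbdef] at this
    omega
  have hc12 : c1 ≠ c2 := by
    intro h
    exact hab (congrArg Prod.snd h)
  have hfc : f c1 ≠ f c2 := hinj c1 hc1T c2 hc2T hc12
  -- cardinalities
  have hcardT : T.card = 2 * m := by
    have hTeq : T = Finset.univ ×ˢ ({a, b} : Finset (Fin n)) := by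
      ext p
      simp [hT, Finset.mem_product]
    rw [hTeq, Finset.card_product, Finset.card_univ, Fintype.card_fin,
      Finset.card_insert_of_notMem (by simpa using hab), Finset.card_singleton]
    omega
  set F : Finset ℕ := T.image f with hF
  have hinjOn : Set.InjOn f ↑T := by
    intro u hu v hv heq
    by_contra hne
    exact hinj u (Finset.mem_coe.mp hu) v (Finset.mem_coe.mp hv) hne heq
  have hcardF : F.card = 2 * m := by
    rw [hF, Finset.card_image_of_injOn hinjOn, hcardT]
  have hFne : F.Nonempty := ⟨f c1, Finset.mem_image_of_mem f hc1T⟩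
  -- weight on values
  set w : ℕ → ℕ := fun x => if x = f c1 ∨ x = f c2 then 1 else 0 with hwdef
  have hw : ∀ x, w x ≤ 1 := by intro x; simp only [hwdef]; split_ifs <;> omega
  have hwval : ∀ u ∈ T, w (f u) = wt u := by
    intro u hu
    by_cases h0 : (u.1 : ℕ) = 0
    · have hu1 : u.1 = (⟨0, hm0⟩ : Fin m) := Fin.ext h0
      obtain ⟨-, hx⟩ := Finset.mem_filter.mp hu
      have : u = c1 ∨ u = c2 := by
        rcases hx with h | h
        · left; rw [hc1, ← h, ← hu1]
        · right; rw [hc2, ← h, ← hu1]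
      rcases this with rfl | rfl <;> simp [hwdef, hwt, h0]
    · have h1 : u ≠ c1 := by
        intro h; rw [h] at h0; simp [hc1] at h0
      have h2 : u ≠ c2 := by
        intro h; rw [h] at h0; simp [hc2] at h0
      have hf1 : f u ≠ f c1 := hinj u hu c1 hc1T h1
      have hf2 : f u ≠ f c2 := hinj u hu c2 hc2T h2
      simp [hwdef, hwt, h0, hf1, hf2]
  have hW : ∑ x ∈ F, w x = 2 := by
    have hfilter : F.filter (fun x => x = f c1 ∨ x = f c2) = {f c1, f c2} := by
      ext x
      simp only [Finset.mem_filter, Finset.mem_insert, Finset.mem_singleton]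
      constructor
      · rintro ⟨-, h⟩; exact h
      · rintro (rfl | rfl)
        · exact ⟨Finset.mem_image_of_mem f hc1T, Or.inl rfl⟩
        · exact ⟨Finset.mem_image_of_mem f hc2T, Or.inr rfl⟩
    calc ∑ x ∈ F, w x = ∑ x ∈ F.filter (fun x => x = f c1 ∨ x = f c2), 1 := by
          rw [Finset.sum_filter]
      _ = (F.filter (fun x => x = f c1 ∨ x = f c2)).card := by
          rw [Finset.card_eq_sum_ones]
      _ = 2 := by
          rw [hfilter, Finset.card_insert_of_notMem (by simpa using hfc),
            Finset.card_singleton]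
  -- gap on values
  have hgapF : ∀ x ∈ F, ∀ y ∈ F, x < y → x + (r + 1) + w x + w y ≤ y := by
    intro x hx y hy hxy
    obtain ⟨u, hu, rfl⟩ := Finset.mem_image.mp hx
    obtain ⟨v, hv, rfl⟩ := Finset.mem_image.mp hy
    have hne : u ≠ v := by rintro rfl; exact lt_irrefl _ hxy
    have h := hgapV u hu v hv hne
    rw [hwval u hu, hwval v hv]
    have habs : |(f u : ℤ) - (f v : ℤ)| = (f v : ℤ) - f u := by
      rw [abs_sub_comm]
      apply abs_of_nonneg
      have : (f u : ℤ) ≤ (f v : ℤ) := by exact_mod_cast hxy.le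
      omega
    rw [habs] at h
    push_cast at h
    omega
  have main := span_lower F (2 * m) (r + 1) (by omega) hcardF hFne w hw hgapF hW
  -- identify the set with ↑T
  have hset : {p : Fin m × Fin n |
      (p.2 : ℕ) = t - 1 ∨ (p.2 : ℕ) = t + (n - 1) / 2 - 1} = ↑T := by
    ext p
    simp only [Set.mem_setOf_eq, hT, Finset.coe_filter, Finset.mem_univ, true_and,
      Set.mem_setOf_eq, hadef, hbdef, Fin.ext_iff]
    omega
  have himg : f '' {p : Fin m × Fin n |
      (p.2 : ℕ) = t - 1 ∨ (p.2 : ℕ) = t + (n - 1) / 2 - 1} = ↑F := by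
    rw [hset, hF, Finset.coe_image]
  rw [himg, hFne.csSup_eq_max', hFne.csInf_eq_min']
  -- final arithmetic
  obtain ⟨m', rfl⟩ : ∃ m', m = 4 + m' := ⟨m - 4, by omega⟩
  have e1 : 2 * (4 + m') - 1 = 2 * m' + 7 := by omega
  have key : (4 + m') * n + (4 + m') = (2 * m' + 7) * (r + 1) + (r + 1) := by
    rw [hrn]; ring
  have hdiv : (n - 3) / 2 = r - 1 := by omega
  rw [e1] at main
  rw [hdiv, key]
  omega
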